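/- arXiv:2004.08125 — 8 statements merged into one kernel-verified Lean document; each statement's English description precedes it below -/
import Mathlib

section
/- Let α > 0 and k, ξ ∈ ℝ with k² + ξ² > 0, and let f, g : ℝ → ℂ be differentiable with f'(t) = I·k·g(t) and g'(t) = (I·α·k/(k² + ξ²))·f(t) for all t, with f(0) = f₀, g(0) = g₀. Then for all t ∈ ℝ: ‖f(t)‖ ≤ ‖f₀‖ + (Real.sqrt (k² + ξ²)/Real.sqrt α)·‖g₀‖ and Real.sqrt (k² + ξ²)·‖g(t)‖ ≤ Real.sqrt α·‖f₀‖ + Real.sqrt (k² + ξ²)·‖g₀‖ (uniform-in-time stability of the vorticity and temperature modes). -/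
private lemma le_of_sq_le_sq' (a b : ℝ) (ha : 0 ≤ a) (hb : 0 ≤ b) (h : a ^ 2 ≤ b ^ 2) :
    a ≤ b := by
  calc a = Real.sqrt (a ^ 2) := (Real.sqrt_sq ha).symm
    _ ≤ Real.sqrt (b ^ 2) := Real.sqrt_le_sqrt h
    _ = b := Real.sqrt_sq hb

/-- Uniform-in-time stability of the vorticity and temperature Fourier modes for
the inviscid linearized Boussinesq equations about hydrostatic balance (no shear). -/
theorem stmt_3 (α k ξ : ℝ) (hα : 0 < α) (hkξ : 0 < k ^ 2 + ξ ^ 2)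
    (f g : ℝ → ℂ) (hf : Differentiable ℝ f) (hg : Differentiable ℝ g)
    (hf' : ∀ t : ℝ, deriv f t = Complex.I * (k : ℂ) * g t)
    (hg' : ∀ t : ℝ, deriv g t =
      Complex.I * (α : ℂ) * (k : ℂ) / ((k ^ 2 + ξ ^ 2 : ℝ) : ℂ) * f t)
    (f₀ g₀ : ℂ) (hf0 : f 0 = f₀) (hg0 : g 0 = g₀) :
    ∀ t : ℝ,
      ‖f t‖ ≤ ‖f₀‖ + (Real.sqrt (k ^ 2 + ξ ^ 2) / Real.sqrt α) * ‖g₀‖ ∧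
      Real.sqrt (k ^ 2 + ξ ^ 2) * ‖g t‖ ≤
        Real.sqrt α * ‖f₀‖ + Real.sqrt (k ^ 2 + ξ ^ 2) * ‖g₀‖ := by
  set K : ℝ := k ^ 2 + ξ ^ 2 with hKdef
  have hKne : K ≠ 0 := ne_of_gt hkξ
  -- energy
  set E : ℝ → ℝ := fun t =>
    α * ((f t).re ^ 2 + (f t).im ^ 2) + K * ((g t).re ^ 2 + (g t).im ^ 2) with hEdef
  have hE : ∀ t : ℝ, HasDerivAt E 0 t := by
    intro t
    have hfd : HasDerivAt f (deriv f t) t := (hf t).hasDerivAt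
    have hgd : HasDerivAt g (deriv g t) t := (hg t).hasDerivAt
    have hfre : HasDerivAt (fun s => (f s).re) ((deriv f t).re) t :=
      Complex.reCLM.hasFDerivAt.comp_hasDerivAt t hfd
    have hfim : HasDerivAt (fun s => (f s).im) ((deriv f t).im) t :=
      Complex.imCLM.hasFDerivAt.comp_hasDerivAt t hfd
    have hgre : HasDerivAt (fun s => (g s).re) ((deriv g t).re) t :=
      Complex.reCLM.hasFDerivAt.comp_hasDerivAt t hgd
    have hgim : HasDerivAt (fun s => (g s).im) ((deriv g t).im) t :=
      Complex.imCLM.hasFDerivAt.comp_hasDerivAt t hgd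
    have hder :
        HasDerivAt E
          (α * ((deriv f t).re * (f t).re) + α * ((f t).re * (deriv f t).re) +
            (α * ((deriv f t).im * (f t).im) + α * ((f t).im * (deriv f t).im)) +
          (K * ((deriv g t).re * (g t).re) + K * ((g t).re * (deriv g t).re) +
            (K * ((deriv g t).im * (g t).im) + K * ((g t).im * (deriv g t).im)))) t := by
      have h1 := ((hfre.mul hfre).add (hfim.mul hfim)).const_mul α
      have h2 := ((hgre.mul hgre).add (hgim.mul hgim)).const_mul K
      have := h1.add h2
      simpa [hEdef, pow_two, mul_add, Pi.add_def] using this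
    convert hder using 1
    have hfre' : (deriv f t).re = -k * (g t).im := by rw [hf' t]; simp
    have hfim' : (deriv f t).im = k * (g t).re := by rw [hf' t]; simp
    have hgc : deriv g t = Complex.I * ((α * k / K : ℝ) : ℂ) * f t := by
      rw [hg' t]; push_cast; ring
    have hgre' : (deriv g t).re = -(α * k / K) * (f t).im := by rw [hgc]; simp
    have hgim' : (deriv g t).im = (α * k / K) * (f t).re := by rw [hgc]; simp
    rw [hfre', hfim', hgre', hgim']
    field_simp
    ring
  have hEdiff : Differentiable ℝ E := fun t => (hE t).differentiableAt
  have hEderiv : ∀ t, deriv E t = 0 := fun t => (hE t).deriv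
  have hconst : ∀ t : ℝ, E t = E 0 := fun t =>
    is_const_of_deriv_eq_zero hEdiff hEderiv t 0
  have hn : ∀ z : ℂ, z.re ^ 2 + z.im ^ 2 = ‖z‖ ^ 2 := by
    intro z
    rw [Complex.sq_norm, Complex.normSq_apply]
    ring
  have energy : ∀ t : ℝ,
      α * ‖f t‖ ^ 2 + K * ‖g t‖ ^ 2 = α * ‖f₀‖ ^ 2 + K * ‖g₀‖ ^ 2 := by
    intro t
    have := hconst t
    simp only [hEdef, hn, hf0, hg0] at this
    exact this
  -- square roots
  set sa : ℝ := Real.sqrt α with hsa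
  set sk : ℝ := Real.sqrt K with hsk
  have hsa2 : sa ^ 2 = α := Real.sq_sqrt hα.le
  have hsk2 : sk ^ 2 = K := Real.sq_sqrt hkξ.le
  have hsapos : 0 < sa := Real.sqrt_pos.mpr hα
  have hskpos : 0 < sk := Real.sqrt_pos.mpr hkξ
  intro t
  have hE0 := energy t
  have hfn : (0:ℝ) ≤ ‖f t‖ := norm_nonneg _
  have hgn : (0:ℝ) ≤ ‖g t‖ := norm_nonneg _
  have hf0n : (0:ℝ) ≤ ‖f₀‖ := norm_nonneg _
  have hg0n : (0:ℝ) ≤ ‖g₀‖ := norm_nonneg _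
  constructor
  · have h1 : sa * ‖f t‖ ≤ sa * ‖f₀‖ + sk * ‖g₀‖ := by
      apply le_of_sq_le_sq' _ _ (by positivity) (by positivity)
      have hKg : 0 ≤ K * ‖g t‖ ^ 2 := by positivity
      nlinarith [mul_nonneg (mul_nonneg hsapos.le hskpos.le) (mul_nonneg hf0n hg0n)]
    have h2 : ‖f t‖ ≤ (sa * ‖f₀‖ + sk * ‖g₀‖) / sa := by
      rw [le_div_iff₀ hsapos, mul_comm]; exact h1
    have h3 : (sa * ‖f₀‖ + sk * ‖g₀‖) / sa = ‖f₀‖ + sk / sa * ‖g₀‖ := by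
      field_simp
    linarith [h2, h3.le]
  · apply le_of_sq_le_sq' _ _ (by positivity) (by positivity)
    have hαf : 0 ≤ α * ‖f t‖ ^ 2 := by positivity
    nlinarith [mul_nonneg (mul_nonneg hsapos.le hskpos.le) (mul_nonneg hf0n hg0n)]
end

section
/- Let ηₓ, η_y ≥ 0, k, ξ ∈ ℝ and g₀ ∈ ℂ, and define g(t) = Complex.exp(−ηₓ·k²·t − η_y·∫₀ᵗ (ξ − k·τ)² dτ)·g₀. Then g(0) = g₀, g'(t) = (−ηₓ·k² − η_y·(ξ − k·t)²)·g(t) for all t ∈ ℝ, and for all t ≥ 0 the pointwise decay estimate ‖g(t)‖ ≤ Real.exp(−ηₓ·k²·t − η_y·k²·t³/12)·‖g₀‖ holds. -/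
lemma aux_int (k ξ t : ℝ) :
    (∫ τ in (0:ℝ)..t, (ξ - k * τ) ^ 2) = ξ^2*t - ξ*k*t^2 + k^2*t^3/3 := by
  have h : ∀ τ ∈ Set.uIcc (0:ℝ) t,
      HasDerivAt (fun s : ℝ => ξ^2*s - ξ*k*s^2 + k^2*s^3/3) ((ξ - k * τ)^2) τ := by
    intro τ _
    have h1 : HasDerivAt (fun s:ℝ => s) 1 τ := hasDerivAt_id τ
    have h2 : HasDerivAt (fun s:ℝ => s^2) (2*τ) τ := by simpa using hasDerivAt_pow 2 τ
    have h3 : HasDerivAt (fun s:ℝ => s^3) (3*τ^2) τ := by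
      simpa using hasDerivAt_pow 3 τ
    have := ((h1.const_mul (ξ^2)).sub (h2.const_mul (ξ*k))).add
      ((h3.const_mul (k^2)).div_const 3)
    exact this.congr_deriv (by ring)
  have hc : IntervalIntegrable (fun τ : ℝ => (ξ - k * τ)^2) MeasureTheory.volume 0 t :=
    (Continuous.intervalIntegrable (by continuity) 0 t)
  have := intervalIntegral.integral_eq_sub_of_hasDerivAt h hc
  rw [this]; ring

lemma aux_f (ηx ηy k ξ : ℝ) (t : ℝ) :
    HasDerivAt (fun s : ℝ => -(ηx * k ^ 2 * s) - ηy * (ξ^2*s - ξ*k*s^2 + k^2*s^3/3))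
      (-(ηx * k ^ 2) - ηy * (ξ - k * t) ^ 2) t := by
  have h1 : HasDerivAt (fun s:ℝ => s) 1 t := hasDerivAt_id t
  have h2 : HasDerivAt (fun s:ℝ => s^2) (2*t) t := by simpa using hasDerivAt_pow 2 t
  have h3 : HasDerivAt (fun s:ℝ => s^3) (3*t^2) t := by simpa using hasDerivAt_pow 3 t
  have := ((h1.const_mul (ηx*k^2)).neg).sub
    ((((h1.const_mul (ξ^2)).sub (h2.const_mul (ξ*k))).add
      ((h3.const_mul (k^2)).div_const 3)).const_mul ηy)
  exact this.congr_deriv (by ring)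

/-- Per-Fourier-mode temperature evolution for the linearized Boussinesq equations
(α = 0, β = 1) with partial dissipation: explicit solution and pointwise decay. -/
theorem stmt_7 (ηx ηy : ℝ) (hηx : 0 ≤ ηx) (hηy : 0 ≤ ηy) (k ξ : ℝ) (g₀ : ℂ)
    (g : ℝ → ℂ)
    (hgdef : ∀ t : ℝ, g t =
      Complex.exp (((-(ηx * k ^ 2 * t) - ηy * ∫ τ in (0:ℝ)..t, (ξ - k * τ) ^ 2 : ℝ) : ℂ)) * g₀) :
    g 0 = g₀ ∧
    (∀ t : ℝ, deriv g t = ((-(ηx * k ^ 2) - ηy * (ξ - k * t) ^ 2 : ℝ) : ℂ) * g t) ∧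
    ∀ t : ℝ, 0 ≤ t →
      ‖g t‖ ≤ Real.exp (-(ηx * k ^ 2 * t) - ηy * k ^ 2 * t ^ 3 / 12) * ‖g₀‖ := by
  set f : ℝ → ℝ := fun s => -(ηx * k ^ 2 * s) - ηy * (ξ^2*s - ξ*k*s^2 + k^2*s^3/3) with hf
  have hg : ∀ t : ℝ, g t = Complex.exp ((f t : ℂ)) * g₀ := by
    intro t
    rw [hgdef t, aux_int]
  refine ⟨?_, ?_, ?_⟩
  · rw [hg 0]
    simp [hf]
  · intro t
    have hd : HasDerivAt g (((-(ηx * k ^ 2) - ηy * (ξ - k * t) ^ 2 : ℝ) : ℂ) * g t) t := by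
      have h1 : HasDerivAt (fun s : ℝ => ((f s : ℂ)))
          ((-(ηx * k ^ 2) - ηy * (ξ - k * t) ^ 2 : ℝ) : ℂ) t :=
        (aux_f ηx ηy k ξ t).ofReal_comp
      have h2 := (h1.cexp).mul_const g₀
      have : HasDerivAt (fun s : ℝ => Complex.exp ((f s : ℂ)) * g₀)
          (((-(ηx * k ^ 2) - ηy * (ξ - k * t) ^ 2 : ℝ) : ℂ) * (Complex.exp ((f t : ℂ)) * g₀)) t := by
        exact h2.congr_deriv (by ring)
      rw [hg t]
      exact this.congr_of_eventuallyEq (by filter_upwards with s using (hg s))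
    exact hd.deriv
  · intro t ht
    rw [hg t]
    rw [norm_mul]
    have : ‖Complex.exp ((f t : ℂ))‖ = Real.exp (f t) := by
      rw [Complex.norm_exp]
      simp
    rw [this]
    gcongr
    have hkey : k ^ 2 * t ^ 3 / 12 ≤ ξ^2*t - ξ*k*t^2 + k^2*t^3/3 := by
      nlinarith [mul_nonneg ht (sq_nonneg (ξ - k*t/2))]
    have := mul_le_mul_of_nonneg_left hkey hηy
    simp only [hf]
    linarith
end

section
/- Let k ≠ 0, ξ ∈ ℝ, ηₓ, η_y ≥ 0 with ηₓ > 0 or η_y > 0, and f₀, g₀ ∈ ℂ. Define f(t) = f₀ + I·k·g₀·∫₀ᵗ Complex.exp(−ηₓ·k²·s − η_y·∫₀ˢ (ξ − k·τ)² dτ) ds (the solution of the inviscid vorticity mode equation f' = I·k·g forced by g(t) = exp(−ηₓk²t − η_y∫₀ᵗ(ξ−kτ)²dτ)·g₀). Then the improper integral ∫₀^∞ Complex.exp(−ηₓ·k²·s − η_y·∫₀ˢ (ξ − k·τ)² dτ) ds converges, so f_∞ := f₀ + I·k·g₀·∫₀^∞ Complex.exp(−ηₓ·k²·s − η_y·∫₀ˢ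 (ξ − k·τ)² dτ) ds is well defined, and for every t ≥ 0: ‖f(t) − f_∞‖ ≤ |k|·‖g₀‖·∫ₜ^∞ Real.exp(−ηₓ·k²·s − η_y·k²·s³/12) ds. -/
open MeasureTheory Set

lemma integral_sq (ξ k s : ℝ) :
    (∫ τ in (0:ℝ)..s, (ξ - k*τ)^2) = ξ^2*s - ξ*k*s^2 + k^2*s^3/3 := by
  have h : ∀ τ ∈ Set.uIcc (0:ℝ) s,
      HasDerivAt (fun τ : ℝ => ξ^2*τ - ξ*k*τ^2 + k^2*τ^3/3) ((ξ - k*τ)^2) τ := by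
    intro τ _
    have h1 : HasDerivAt (fun τ : ℝ => ξ^2*τ - ξ*k*τ^2 + k^2*τ^3/3)
        (ξ^2*1 - ξ*k*(2*τ^1) + k^2*(3*τ^2)/3) τ :=
      (((hasDerivAt_id τ).const_mul (ξ^2)).sub
        (((hasDerivAt_pow 2 τ)).const_mul (ξ*k))).add
        ((((hasDerivAt_pow 3 τ)).const_mul (k^2)).div_const 3)
    convert h1 using 1
    ring
  have hint : IntervalIntegrable (fun τ : ℝ => (ξ - k*τ)^2) MeasureTheory.volume 0 s :=
    (by continuity : Continuous fun τ : ℝ => (ξ - k*τ)^2).intervalIntegrable _ _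
  rw [intervalIntegral.integral_eq_sub_of_hasDerivAt h hint]
  ring

/-- Convergence of the vorticity Fourier mode to an asymptotic profile for the
linearized Boussinesq equations (α = 0, β = 1, no viscosity) with thermal
diffusion, together with a quantitative tail estimate. -/
theorem stmt_10 (k ξ ηx ηy : ℝ) (hk : k ≠ 0) (hηx : 0 ≤ ηx) (hηy : 0 ≤ ηy)
    (hpos : 0 < ηx ∨ 0 < ηy) (f₀ g₀ : ℂ)
    (E : ℝ → ℂ)
    (hE : ∀ s : ℝ, E s =
      Complex.exp (((-(ηx * k ^ 2 * s) - ηy * ∫ τ in (0:ℝ)..s, (ξ - k * τ) ^ 2 : ℝ) : ℂ)))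
    (f : ℝ → ℂ)
    (hf : ∀ t : ℝ, f t = f₀ + Complex.I * (k : ℂ) * g₀ * ∫ s in (0:ℝ)..t, E s) :
    MeasureTheory.IntegrableOn E (Set.Ioi 0) ∧
    ∀ t : ℝ, 0 ≤ t →
      ‖f t - (f₀ + Complex.I * (k : ℂ) * g₀ * ∫ s in Set.Ioi (0:ℝ), E s)‖ ≤
        |k| * ‖g₀‖ * ∫ s in Set.Ioi t, Real.exp (-(ηx * k ^ 2 * s) - ηy * k ^ 2 * s ^ 3 / 12) := by
  set g : ℝ → ℝ := fun s => -(ηx*k^2*s) - ηy*(ξ^2*s - ξ*k*s^2 + k^2*s^3/3) with hg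
  set b : ℝ → ℝ := fun s => -(ηx * k ^ 2 * s) - ηy * k ^ 2 * s ^ 3 / 12 with hb
  have hE' : ∀ s : ℝ, E s = Complex.exp ((g s : ℂ)) := by
    intro s; rw [hE s, integral_sq]
  have hnorm : ∀ s : ℝ, ‖E s‖ = Real.exp (g s) := by
    intro s
    rw [hE' s, Complex.norm_exp, Complex.ofReal_re]
  have hk2 : 0 < k^2 := by positivity
  have hgb : ∀ s : ℝ, 0 ≤ s → g s ≤ b s := by
    intro s hs
    have h1 : 0 ≤ ηy * (s * (ξ - k*s/2)^2) :=
      mul_nonneg hηy (mul_nonneg hs (sq_nonneg _))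
    simp only [hg, hb]
    nlinarith [h1]
  set a : ℝ := ηx*k^2 + ηy*k^2/12 with ha
  have hapos : 0 < a := by
    rcases hpos with h | h
    · have h1 : 0 < ηx*k^2 := by positivity
      have h2 : 0 ≤ ηy*k^2/12 := by positivity
      simp only [ha]; linarith
    · have h1 : 0 < ηy*k^2/12 := by positivity
      have h2 : 0 ≤ ηx*k^2 := by positivity
      simp only [ha]; linarith
  set c : ℝ := ηy*k^2/12 with hc
  have hbc : ∀ s : ℝ, 0 ≤ s → b s ≤ c + -a*s := by
    intro s hs
    have hcube : 0 ≤ s^3 - s + 1 := by nlinarith [sq_nonneg (s-1), sq_nonneg s, sq_nonneg (s - 1/2)]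
    have h2 : 0 ≤ ηy*k^2 := by positivity
    simp only [hb, ha, hc]
    nlinarith [mul_nonneg h2 hcube]
  have hcont : Continuous E := by
    have : E = fun s => Complex.exp ((g s : ℂ)) := funext hE'
    rw [this]
    fun_prop
  have hBint : ∀ t : ℝ, IntegrableOn (fun s => Real.exp c * Real.exp (-a*s)) (Ioi t) := by
    intro t
    exact (exp_neg_integrableOn_Ioi t hapos).const_mul _
  have hEint : IntegrableOn E (Ioi 0) := by
    apply (hBint 0).mono' hcont.aestronglyMeasurable.restrict
    rw [ae_restrict_iff' measurableSet_Ioi]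
    filter_upwards with s hs
    rw [hnorm s, ← Real.exp_add]
    exact Real.exp_le_exp.2 ((hgb s hs.le).trans (hbc s hs.le))
  have hbint : ∀ t : ℝ, 0 ≤ t → IntegrableOn (fun s => Real.exp (b s)) (Ioi t) := by
    intro t ht
    apply ((hBint 0).mono_set (Ioi_subset_Ioi ht)).mono'
      (by fun_prop : Continuous fun s => Real.exp (b s)).aestronglyMeasurable.restrict
    rw [ae_restrict_iff' measurableSet_Ioi]
    filter_upwards with s hs
    have hs0 : 0 ≤ s := ht.trans hs.le
    rw [Real.norm_eq_abs, abs_of_pos (Real.exp_pos _), ← Real.exp_add]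
    exact Real.exp_le_exp.2 (hbc s hs0)
  refine ⟨hEint, fun t ht => ?_⟩
  have hEiT : IntegrableOn E (Ioi t) := hEint.mono_set (Ioi_subset_Ioi ht)
  have hsplit : (∫ s in Ioi (0:ℝ), E s) = (∫ s in Ioc 0 t, E s) + ∫ s in Ioi t, E s := by
    rw [← MeasureTheory.setIntegral_union (Set.Ioc_disjoint_Ioi le_rfl) measurableSet_Ioi
      (hEint.mono_set Set.Ioc_subset_Ioi_self) hEiT, Set.Ioc_union_Ioi_eq_Ioi ht]
  have hft : f t - (f₀ + Complex.I * (k : ℂ) * g₀ * ∫ s in Set.Ioi (0:ℝ), E s)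
      = -(Complex.I * (k : ℂ) * g₀ * ∫ s in Ioi t, E s) := by
    rw [hf t, hsplit, intervalIntegral.integral_of_le ht]
    ring
  rw [hft, norm_neg]
  have hnm : ‖Complex.I * (k : ℂ) * g₀ * ∫ s in Ioi t, E s‖
      = |k| * ‖g₀‖ * ‖∫ s in Ioi t, E s‖ := by
    simp [norm_mul, Complex.norm_real, Real.norm_eq_abs]
  rw [hnm]
  have h1 : ‖∫ s in Ioi t, E s‖ ≤ ∫ s in Ioi t, Real.exp (b s) := by
    refine (norm_integral_le_integral_norm _).trans ?_
    apply setIntegral_mono_on hEiT.norm (hbint t ht) measurableSet_Ioi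
    intro s hs
    rw [hnorm s]
    exact Real.exp_le_exp.2 (hgb s (ht.trans hs.le))
  calc |k| * ‖g₀‖ * ‖∫ s in Ioi t, E s‖
      ≤ |k| * ‖g₀‖ * ∫ s in Ioi t, Real.exp (b s) :=
        mul_le_mul_of_nonneg_left h1 (by positivity)
    _ = |k| * ‖g₀‖ * ∫ s in Set.Ioi t, Real.exp (-(ηx * k ^ 2 * s) - ηy * k ^ 2 * s ^ 3 / 12) := rfl
end

section
/- Let α ∈ ℝ, νₓ, ν_y, ηₓ, η_y ∈ ℝ and k, ξ ∈ ℝ with k² + ξ² > 0. Suppose f, g : ℝ → ℂ are differentiable and satisfy f'(t) = (−νₓ·k² − ν_y·ξ²)·f(t) + I·k·g(t) and g'(t) = (I·α·k/(k² + ξ²))·f(t) + (−ηₓ·k² − η_y·ξ²)·g(t) for all t. Then for all t ∈ ℝ: d/dt [α·‖f(t)‖² + (k² + ξ²)·‖g(t)‖²] = −2·(νₓ·k² + ν_y·ξ²)·α·‖f(t)‖² − 2·(ηₓ·k² + η_y·ξ²)·(k² + ξ²)·‖g(t)‖² (the coupling terms cancel exactly). -/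
lemma normSq_hasDerivAt {h : ℝ → ℂ} {d : ℂ} {t : ℝ} (hd : HasDerivAt h d t) :
    HasDerivAt (fun s : ℝ => ‖h s‖ ^ 2)
      (2 * ((h t).re * d.re + (h t).im * d.im)) t := by
  have hre : HasDerivAt (fun s : ℝ => (h s).re) d.re t :=
    (Complex.reCLM.hasFDerivAt.comp_hasDerivAt t hd)
  have him : HasDerivAt (fun s : ℝ => (h s).im) d.im t :=
    (Complex.imCLM.hasFDerivAt.comp_hasDerivAt t hd)
  have : HasDerivAt (fun s : ℝ => (h s).re * (h s).re + (h s).im * (h s).im) _ t :=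
    (hre.mul hre).add (him.mul him)
  have heq : (fun s : ℝ => ‖h s‖ ^ 2)
      = fun s : ℝ => (h s).re * (h s).re + (h s).im * (h s).im := by
    funext s
    rw [← Complex.normSq_apply, ← Complex.sq_norm]
  rw [heq]
  convert this using 1
  ring

/-- Exact cancellation of the coupling terms in the weighted energy identity for
the per-Fourier-mode linearized Boussinesq equations about hydrostatic balance
(no shear) with partial dissipation. -/
theorem stmt_11 (α νx νy ηx ηy k ξ : ℝ) (hkξ : 0 < k ^ 2 + ξ ^ 2)
    (f g : ℝ → ℂ) (hf : Differentiable ℝ f) (hg : Differentiable ℝ g)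
    (hf' : ∀ t : ℝ, deriv f t =
      ((-(νx * k ^ 2) - νy * ξ ^ 2 : ℝ) : ℂ) * f t + Complex.I * (k : ℂ) * g t)
    (hg' : ∀ t : ℝ, deriv g t =
      Complex.I * (α : ℂ) * (k : ℂ) / ((k ^ 2 + ξ ^ 2 : ℝ) : ℂ) * f t +
      ((-(ηx * k ^ 2) - ηy * ξ ^ 2 : ℝ) : ℂ) * g t) :
    ∀ t : ℝ,
      deriv (fun s : ℝ => α * ‖f s‖ ^ 2 + (k ^ 2 + ξ ^ 2) * ‖g s‖ ^ 2) t =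
        -2 * (νx * k ^ 2 + νy * ξ ^ 2) * α * ‖f t‖ ^ 2
        - 2 * (ηx * k ^ 2 + ηy * ξ ^ 2) * (k ^ 2 + ξ ^ 2) * ‖g t‖ ^ 2 := by
  intro t
  have hK : (k ^ 2 + ξ ^ 2 : ℝ) ≠ 0 := ne_of_gt hkξ
  have hft : HasDerivAt f (deriv f t) t := (hf t).hasDerivAt
  have hgt : HasDerivAt g (deriv g t) t := (hg t).hasDerivAt
  have h1 := normSq_hasDerivAt hft
  have h2 := normSq_hasDerivAt hgt
  have hD := ((h1.const_mul α).add (h2.const_mul (k ^ 2 + ξ ^ 2)))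
  rw [show (fun s : ℝ => α * ‖f s‖ ^ 2 + (k ^ 2 + ξ ^ 2) * ‖g s‖ ^ 2) =
      ((fun y => α * ‖f y‖ ^ 2) + fun y => (k ^ 2 + ξ ^ 2) * ‖g y‖ ^ 2) from rfl, hD.deriv]
  set a := (f t).re
  set b := (f t).im
  set c := (g t).re
  set d := (g t).im
  have hfre : (deriv f t).re = (-(νx * k ^ 2) - νy * ξ ^ 2) * a - k * d := by
    rw [hf' t]; simp [Complex.add_re, Complex.mul_re, Complex.mul_im, pow_two, a, d] <;> ring
  have hfim : (deriv f t).im = (-(νx * k ^ 2) - νy * ξ ^ 2) * b + k * c := by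
    rw [hf' t]; simp [Complex.add_im, Complex.mul_re, Complex.mul_im, pow_two, b, c] <;> ring
  have hKc : ((k ^ 2 + ξ ^ 2 : ℝ) : ℂ) ≠ 0 := by exact_mod_cast hK
  have hcoef : Complex.I * (α : ℂ) * (k : ℂ) / ((k ^ 2 + ξ ^ 2 : ℝ) : ℂ)
      = ((α * k / (k ^ 2 + ξ ^ 2) : ℝ) : ℂ) * Complex.I := by
    rw [div_eq_iff hKc]
    push_cast at hKc ⊢
    field_simp
  have hgre : (deriv g t).re = -(α * k / (k ^ 2 + ξ ^ 2)) * b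
      + (-(ηx * k ^ 2) - ηy * ξ ^ 2) * c := by
    rw [hg' t, hcoef]
    simp only [Complex.add_re, Complex.mul_re, Complex.mul_im, Complex.I_re,
      Complex.I_im, Complex.ofReal_re, Complex.ofReal_im, mul_zero, mul_one,
      zero_mul, zero_sub, sub_zero, add_zero, zero_add, b, c]
    try ring
  have hgim : (deriv g t).im = (α * k / (k ^ 2 + ξ ^ 2)) * a
      + (-(ηx * k ^ 2) - ηy * ξ ^ 2) * d := by
    rw [hg' t, hcoef]
    simp only [Complex.add_im, Complex.mul_re, Complex.mul_im, Complex.I_re,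
      Complex.I_im, Complex.ofReal_re, Complex.ofReal_im, mul_zero, mul_one,
      zero_mul, zero_sub, sub_zero, add_zero, zero_add, a, d]
    try ring
  have hnf : ‖f t‖ ^ 2 = a * a + b * b := by
    rw [← Complex.normSq_apply, ← Complex.sq_norm]
  have hng : ‖g t‖ ^ 2 = c * c + d * d := by
    rw [← Complex.normSq_apply, ← Complex.sq_norm]
  rw [hfre, hfim, hgre, hgim, hnf, hng]
  field_simp
  ring
end

section
/- Let α, νₓ, ν_y, ηₓ, η_y ∈ ℝ and k, ξ ∈ ℝ with k ≠ 0 and k² + ξ² > 0, and let M be the complex 2×2 matrix with entries M₀₀ = −νₓ·k² − ν_y·ξ², M₀₁ = I·k, M₁₀ = I·α·k/(k² + ξ²), M₁₁ = −ηₓ·k² − η_y·ξ². Assume α > α* := ((k² + ξ²)/k²)·(((ηₓ − νₓ)/2)·k² + ((η_y − ν_y)/2)·ξ²)². Then every λ ∈ ℂ with Matrix.det (M − λ·1) = 0 satisfies Complex.re λ = −((ηₓ + νₓ)/2)·k² − ((η_y + ν_y)/2)·ξ². -/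
/-- Above the critical balance slope α*, every eigenvalue of the Fourier-mode
coefficient matrix has real part equal to the mean dissipation rate. -/
theorem stmt_14 (α νx νy ηx ηy k ξ : ℝ) (hk : k ≠ 0) (hkξ : 0 < k ^ 2 + ξ ^ 2)
    (M : Matrix (Fin 2) (Fin 2) ℂ)
    (hM : M = !![((-(νx * k ^ 2) - νy * ξ ^ 2 : ℝ) : ℂ), Complex.I * (k : ℂ);
      Complex.I * (α : ℂ) * (k : ℂ) / ((k ^ 2 + ξ ^ 2 : ℝ) : ℂ),
      ((-(ηx * k ^ 2) - ηy * ξ ^ 2 : ℝ) : ℂ)])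
    (hα : α > ((k ^ 2 + ξ ^ 2) / k ^ 2) *
      (((ηx - νx) / 2) * k ^ 2 + ((ηy - νy) / 2) * ξ ^ 2) ^ 2) :
    ∀ l : ℂ, Matrix.det (M - l • (1 : Matrix (Fin 2) (Fin 2) ℂ)) = 0 →
      l.re = -((ηx + νx) / 2) * k ^ 2 - ((ηy + νy) / 2) * ξ ^ 2 := by
  intro l hdet
  set t : ℝ := -((ηx + νx) / 2) * k ^ 2 - ((ηy + νy) / 2) * ξ ^ 2 with ht
  set S : ℝ := ((ηx - νx) / 2) * k ^ 2 + ((ηy - νy) / 2) * ξ ^ 2 with hS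
  set D : ℝ := S ^ 2 - α * k ^ 2 / (k ^ 2 + ξ ^ 2) with hD
  have hc : (k ^ 2 + ξ ^ 2 : ℝ) ≠ 0 := ne_of_gt hkξ
  have hcC : ((k ^ 2 + ξ ^ 2 : ℝ) : ℂ) ≠ 0 := by exact_mod_cast hc
  have hDneg : D < 0 := by
    have hk2 : (0:ℝ) < k ^ 2 := by positivity
    rw [hD, sub_neg, lt_div_iff₀ hkξ]
    calc S ^ 2 * (k ^ 2 + ξ ^ 2) = ((k ^ 2 + ξ ^ 2) / k ^ 2 * S ^ 2) * k ^ 2 := by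
          field_simp
      _ < α * k ^ 2 := by exact mul_lt_mul_of_pos_right hα hk2
  have key : (l - (t : ℂ)) ^ 2 = (D : ℂ) := by
    rw [hM] at hdet
    simp [Matrix.det_fin_two, Matrix.sub_apply, Matrix.smul_apply, Matrix.one_apply,
      Fin.ext_iff] at hdet
    have hI : Complex.I ^ 2 = -1 := Complex.I_sq
    have hone : ((k:ℂ)^2 + (ξ:ℂ)^2) * ((k:ℂ)^2 + (ξ:ℂ)^2)⁻¹ = 1 := by
      rw [mul_inv_cancel₀]; push_cast at hcC; exact hcC
    rw [ht, hD, hS]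
    push_cast
    linear_combination hdet + (α:ℂ)*(k:ℂ)^2/((k:ℂ)^2+(ξ:ℂ)^2) * hI
  have him := congrArg Complex.im key
  have hre := congrArg Complex.re key
  simp only [pow_two, Complex.mul_im, Complex.mul_re, Complex.sub_re, Complex.sub_im,
    Complex.ofReal_re, Complex.ofReal_im] at him hre
  have hxy : (l.re - t) * l.im = 0 := by nlinarith [him]
  rcases mul_eq_zero.mp hxy with h | h
  · linarith
  · exfalso
    rw [h] at hre
    nlinarith [sq_nonneg (l.re - t), hre]
end

section
/- Let νₓ, ν_y, ηₓ, η_y ≥ 0 and k, ξ ∈ ℝ with k ≠ 0 and k² + ξ² > 0, and let M be the complex 2×2 matrix with entries M₀₀ = −νₓ·k² − ν_y·ξ², M₀₁ = I·k, M₁₀ = I·α·k/(k² + ξ²), M₁₁ = −ηₓ·k² − η_y·ξ². Assume 0 < α < α* := ((k² + ξ²)/k²)·(((ηₓ − νₓ)/2)·k² + ((η_y − ν_y)/2)·ξ²)². Then M has exactly two eigenvalues, both are real and distinct, and every λ ∈ ℂ with Matrix.det (M − λ·1) = 0 satisfies Complex.im λ = 0 and Complex.re λ < −(min νₓ ηₓ·k²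 + min ν_y η_y·ξ²) ≤ 0; in particular both eigenvalues are strictly negative. -/
set_option maxHeartbeats 1600000 in
/-- Below the critical balance slope α*, the Fourier-mode coefficient matrix has
exactly two eigenvalues, both real, distinct and strictly negative. -/
theorem stmt_15 (α νx νy ηx ηy k ξ : ℝ)
    (hνx : 0 ≤ νx) (hνy : 0 ≤ νy) (hηx : 0 ≤ ηx) (hηy : 0 ≤ ηy)
    (hk : k ≠ 0) (hkξ : 0 < k ^ 2 + ξ ^ 2)
    (M : Matrix (Fin 2) (Fin 2) ℂ)
    (hM : M = !![((-(νx * k ^ 2) - νy * ξ ^ 2 : ℝ) : ℂ), Complex.I * (k : ℂ);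
      Complex.I * (α : ℂ) * (k : ℂ) / ((k ^ 2 + ξ ^ 2 : ℝ) : ℂ),
      ((-(ηx * k ^ 2) - ηy * ξ ^ 2 : ℝ) : ℂ)])
    (hα0 : 0 < α)
    (hα : α < ((k ^ 2 + ξ ^ 2) / k ^ 2) *
      (((ηx - νx) / 2) * k ^ 2 + ((ηy - νy) / 2) * ξ ^ 2) ^ 2) :
    (∃ l₁ l₂ : ℝ, l₁ ≠ l₂ ∧
      ∀ l : ℂ, Matrix.det (M - l • (1 : Matrix (Fin 2) (Fin 2) ℂ)) = 0 ↔
        (l = (l₁ : ℂ) ∨ l = (l₂ : ℂ))) ∧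
    (∀ l : ℂ, Matrix.det (M - l • (1 : Matrix (Fin 2) (Fin 2) ℂ)) = 0 →
      l.im = 0 ∧ l.re < -(min νx ηx * k ^ 2 + min νy ηy * ξ ^ 2)) ∧
    -(min νx ηx * k ^ 2 + min νy ηy * ξ ^ 2) ≤ 0 := by
  have hk2 : 0 < k ^ 2 := by positivity
  obtain ⟨a, ha⟩ : ∃ x : ℝ, x = νx * k ^ 2 + νy * ξ ^ 2 := ⟨_, rfl⟩
  obtain ⟨b, hb⟩ : ∃ x : ℝ, x = ηx * k ^ 2 + ηy * ξ ^ 2 := ⟨_, rfl⟩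
  obtain ⟨m, hm⟩ : ∃ x : ℝ, x = min νx ηx * k ^ 2 + min νy ηy * ξ ^ 2 := ⟨_, rfl⟩
  rw [← hm]
  have hm0 : 0 ≤ m := by
    have h1 : 0 ≤ min νx ηx := le_min hνx hηx
    have h2 : 0 ≤ min νy ηy := le_min hνy hηy
    rw [hm]; positivity
  obtain ⟨c, hc⟩ : ∃ x : ℝ, x = α * k ^ 2 / (k ^ 2 + ξ ^ 2) := ⟨_, rfl⟩
  have hcpos : 0 < c := hc ▸ div_pos (mul_pos hα0 hk2) hkξ
  have hcK : c * (k ^ 2 + ξ ^ 2) = α * k ^ 2 := hc ▸ div_mul_cancel₀ _ hkξ.ne'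
  -- the discriminant is positive
  have hαX : α < ((k ^ 2 + ξ ^ 2) / k ^ 2) * ((b - a) / 2) ^ 2 := by
    have : ((ηx - νx) / 2) * k ^ 2 + ((ηy - νy) / 2) * ξ ^ 2 = (b - a) / 2 := by
      rw [ha, hb]; ring
    rwa [this] at hα
  have hcX : c < ((b - a) / 2) ^ 2 := by
    rw [hc, div_lt_iff₀ hkξ]
    rw [div_mul_eq_mul_div, lt_div_iff₀ hk2] at hαX
    nlinarith [hαX]
  have hD0 : 0 < (a - b) ^ 2 - 4 * c := by
    have h4 : ((b - a) / 2) ^ 2 * 4 = (a - b) ^ 2 := by ring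
    linarith
  obtain ⟨s, hsdef⟩ : ∃ x : ℝ, x = Real.sqrt ((a - b) ^ 2 - 4 * c) := ⟨_, rfl⟩
  have hs : s ^ 2 = (a - b) ^ 2 - 4 * c := hsdef ▸ Real.sq_sqrt hD0.le
  have hspos : 0 < s := hsdef ▸ Real.sqrt_pos.mpr hD0
  obtain ⟨l₁, hl₁⟩ : ∃ x : ℝ, x = (-(a + b) - s) / 2 := ⟨_, rfl⟩
  obtain ⟨l₂, hl₂⟩ : ∃ x : ℝ, x = (-(a + b) + s) / 2 := ⟨_, rfl⟩
  have hsum : l₁ + l₂ = -(a + b) := by rw [hl₁, hl₂]; ring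
  have hprod : l₁ * l₂ = a * b + c := by
    rw [hl₁, hl₂]; linear_combination (-(1 : ℝ) / 4) * hs
  have hsum' : l₁ + l₂ = -((νx * k ^ 2 + νy * ξ ^ 2) + (ηx * k ^ 2 + ηy * ξ ^ 2)) := by
    rw [hsum, ha, hb]
  have hprodK' : l₁ * l₂ * (k ^ 2 + ξ ^ 2) =
      (νx * k ^ 2 + νy * ξ ^ 2) * (ηx * k ^ 2 + ηy * ξ ^ 2) * (k ^ 2 + ξ ^ 2) + α * k ^ 2 := by
    rw [hprod, ha, hb]; linear_combination hcK
  have hma : m ≤ a := by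
    rw [hm, ha]
    exact add_le_add (mul_le_mul_of_nonneg_right (min_le_left _ _) hk2.le)
      (mul_le_mul_of_nonneg_right (min_le_left _ _) (sq_nonneg ξ))
  have hmb : m ≤ b := by
    rw [hm, hb]
    exact add_le_add (mul_le_mul_of_nonneg_right (min_le_right _ _) hk2.le)
      (mul_le_mul_of_nonneg_right (min_le_right _ _) (sq_nonneg ξ))
  -- the larger root is < -m
  have hl₂m : l₂ < -m := by
    have hlt : s < a + b - 2 * m := by
      have h1 : s ^ 2 < (a + b - 2 * m) ^ 2 := by
        rw [hs]
        nlinarith [mul_nonneg (sub_nonneg.2 hma) (sub_nonneg.2 hmb), hcpos]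
      nlinarith [hspos.le, h1]
    rw [hl₂]; linarith
  have hl₁l₂ : l₁ < l₂ := by rw [hl₁, hl₂]; linarith
  -- key determinant factorization
  have key : ∀ l : ℂ, Matrix.det (M - l • (1 : Matrix (Fin 2) (Fin 2) ℂ)) =
      (l - (l₁ : ℂ)) * (l - (l₂ : ℂ)) := by
    intro l
    have hK : ((k ^ 2 + ξ ^ 2 : ℝ) : ℂ) ≠ 0 := by exact_mod_cast hkξ.ne'
    have hsumC : (l₁ : ℂ) + l₂ =
        -(((νx * k ^ 2 + νy * ξ ^ 2 : ℝ) : ℂ) + ((ηx * k ^ 2 + ηy * ξ ^ 2 : ℝ) : ℂ)) := by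
      exact_mod_cast hsum'
    have hprodC : (l₁ : ℂ) * l₂ * ((k ^ 2 + ξ ^ 2 : ℝ) : ℂ) =
        ((νx * k ^ 2 + νy * ξ ^ 2 : ℝ) : ℂ) * ((ηx * k ^ 2 + ηy * ξ ^ 2 : ℝ) : ℂ) *
          ((k ^ 2 + ξ ^ 2 : ℝ) : ℂ) + (α : ℂ) * (k : ℂ) ^ 2 := by
      exact_mod_cast hprodK'
    rw [hM]
    simp only [Matrix.det_fin_two, Matrix.sub_apply, Matrix.smul_apply, Matrix.one_apply,
      Matrix.cons_val', Matrix.cons_val_zero, Matrix.cons_val_one, Matrix.head_cons,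
      Matrix.head_fin_const, Matrix.empty_val', Matrix.cons_val_fin_one, smul_eq_mul, Matrix.of_apply]
    push_cast at *
    field_simp
    linear_combination l * ((k:ℂ)^2+(ξ:ℂ)^2) * hsumC - hprodC - (Complex.I_sq) * (α:ℂ) * (k:ℂ)^2
  have hroot : ∀ l : ℂ, Matrix.det (M - l • (1 : Matrix (Fin 2) (Fin 2) ℂ)) = 0 ↔
      (l = (l₁ : ℂ) ∨ l = (l₂ : ℂ)) := by
    intro l
    rw [key l, mul_eq_zero, sub_eq_zero, sub_eq_zero]
  refine ⟨⟨l₁, l₂, hl₁l₂.ne, hroot⟩, ?_, by linarith⟩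
  intro l hl
  rcases (hroot l).mp hl with h | h <;> subst h <;>
    exact ⟨Complex.ofReal_im _, by rw [Complex.ofReal_re]; linarith⟩
end

section
/- Let α, νₓ, ν_y, ηₓ, η_y ∈ ℝ, k, ξ ∈ ℝ with k ≠ 0. Suppose f, g : ℝ → ℂ are differentiable and satisfy f'(t) = (−νₓ·k² − ν_y·(ξ − k·t)²)·f(t) + I·k·g(t) and g'(t) = (I·α·k/(k² + (ξ − k·t)²))·f(t) + (−ηₓ·k² − η_y·(ξ − k·t)²)·g(t) for all t. Then for all t ∈ ℝ: d/dt [α·‖f(t)‖² + (k² + (ξ − k·t)²)·‖g(t)‖²] = −2·(νₓ·k² + ν_y·(ξ − k·t)²)·α·‖f(t)‖² + (−2·ηₓ·k² − 2·η_y·(ξ − k·t)²)·(k² + (ξ − k·t)²)·‖g(t)‖² + 2·k·(k·t − ξ)·‖g(t)‖² (the coupling terms cancel exactly and only the time-dependence of the weight k² + (ξ − kt)² contributes the last term). -/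
/-- Weighted energy identity for the per-Fourier-mode linearized Boussinesq
equations about combined shear (β = 1) and hydrostatic balance, in coordinates
moving with the shear: the coupling terms cancel exactly and only the
time-dependence of the weight k² + (ξ − kt)² contributes the last term. -/
theorem stmt_16 (α νx νy ηx ηy k ξ : ℝ) (hk : k ≠ 0)
    (f g : ℝ → ℂ) (hf : Differentiable ℝ f) (hg : Differentiable ℝ g)
    (hf' : ∀ t : ℝ, deriv f t =
      ((-(νx * k ^ 2) - νy * (ξ - k * t) ^ 2 : ℝ) : ℂ) * f t + Complex.I * (k : ℂ) * g t)
    (hg' : ∀ t : ℝ, deriv g t =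
      Complex.I * (α : ℂ) * (k : ℂ) / ((k ^ 2 + (ξ - k * t) ^ 2 : ℝ) : ℂ) * f t +
      ((-(ηx * k ^ 2) - ηy * (ξ - k * t) ^ 2 : ℝ) : ℂ) * g t) :
    ∀ t : ℝ,
      deriv (fun s : ℝ => α * ‖f s‖ ^ 2 + (k ^ 2 + (ξ - k * s) ^ 2) * ‖g s‖ ^ 2) t =
        -2 * (νx * k ^ 2 + νy * (ξ - k * t) ^ 2) * α * ‖f t‖ ^ 2
        + (-2 * ηx * k ^ 2 - 2 * ηy * (ξ - k * t) ^ 2) * (k ^ 2 + (ξ - k * t) ^ 2) * ‖g t‖ ^ 2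
        + 2 * k * (k * t - ξ) * ‖g t‖ ^ 2 := by
  intro t
  have hw0 : (k ^ 2 + (ξ - k * t) ^ 2) ≠ 0 := by positivity
  have Hf : HasDerivAt f
      (((-(νx * k ^ 2) - νy * (ξ - k * t) ^ 2 : ℝ) : ℂ) * f t + Complex.I * (k : ℂ) * g t) t := by
    rw [← hf' t]; exact (hf t).hasDerivAt
  have Hg : HasDerivAt g
      (Complex.I * (α : ℂ) * (k : ℂ) / ((k ^ 2 + (ξ - k * t) ^ 2 : ℝ) : ℂ) * f t +
        ((-(ηx * k ^ 2) - ηy * (ξ - k * t) ^ 2 : ℝ) : ℂ) * g t) t := by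
    rw [← hg' t]; exact (hg t).hasDerivAt
  have hlin : HasDerivAt (fun s : ℝ => ξ - k * s) (-k) t := by
    simpa using (hasDerivAt_const t ξ).fun_sub ((hasDerivAt_id t).const_mul k)
  have hw : HasDerivAt (fun s : ℝ => k ^ 2 + (ξ - k * s) ^ 2)
      (2 * (ξ - k * t) * (-k)) t := by
    simpa using (hasDerivAt_const t (k ^ 2)).fun_add (hlin.fun_pow 2)
  have hE := ((Hf.norm_sq.const_mul α).fun_add (hw.fun_mul Hg.norm_sq)).deriv
  rw [hE]
  simp only [Complex.inner, Complex.mul_re, Complex.add_re,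
    Complex.add_im, Complex.mul_im, Complex.ofReal_re, Complex.ofReal_im, Complex.I_re,
    Complex.I_im, Complex.div_re, Complex.div_im, Complex.normSq_apply, Complex.conj_re,
    Complex.conj_im, Complex.sq_norm]
  field_simp
  ring
end

section
/- Let α ≥ 0, νₓ, ν_y, ηₓ, η_y ≥ 0, k > 0 and ξ ≥ 0. Suppose f, g : ℝ → ℂ are differentiable and satisfy f'(t) = (−νₓ·k² − ν_y·(ξ − k·t)²)·f(t) + I·k·g(t) and g'(t) = (I·α·k/(k² + (ξ − k·t)²))·f(t) + (−ηₓ·k² − η_y·(ξ − k·t)²)·g(t) for all t. Then for all T ≥ 0: α·‖f(T)‖² + (k² + (ξ − k·T)²)·‖g(T)‖² ≤ (1 + T²)·Real.exp(−2·min νₓ ηₓ·k²·T − min ν_y η_y·k²·T³/6)·(α·‖f(0)‖² + (k² + ξ²)·‖g(0)‖²). -/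
lemma aux_re1 (c k' : ℝ) (z w : ℂ) :
    ((c : ℂ) * z + Complex.I * (k' : ℂ) * w).re = c * z.re - k' * w.im := by
  simp [Complex.add_re, Complex.mul_re, Complex.mul_im]; ring
lemma aux_im1 (c k' : ℝ) (z w : ℂ) :
    ((c : ℂ) * z + Complex.I * (k' : ℂ) * w).im = c * z.im + k' * w.re := by
  simp [Complex.add_im, Complex.mul_re, Complex.mul_im]
lemma aux_re2 (c c' : ℝ) (z w : ℂ) :
    (Complex.I * (c : ℂ) * z + (c' : ℂ) * w).re = -(c * z.im) + c' * w.re := by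
  simp [Complex.add_re, Complex.mul_re, Complex.mul_im]
lemma aux_im2 (c c' : ℝ) (z w : ℂ) :
    (Complex.I * (c : ℂ) * z + (c' : ℂ) * w).im = c * z.re + c' * w.im := by
  simp [Complex.add_im, Complex.mul_re, Complex.mul_im]

lemma aux_norm_sq (z : ℂ) : ‖z‖ ^ 2 = z.re ^ 2 + z.im ^ 2 := by
  rw [Complex.sq_norm, Complex.normSq_apply]; ring

set_option maxHeartbeats 4000000 in
/-- Per-Fourier-mode enhanced dissipation estimate for the linearized Boussinesq
equations about combined shear (β = 1) and hydrostatic balance with partial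
dissipation, in coordinates moving with the shear. -/
theorem stmt_18 (α νx νy ηx ηy k ξ : ℝ) (hα : 0 ≤ α)
    (hνx : 0 ≤ νx) (hνy : 0 ≤ νy) (hηx : 0 ≤ ηx) (hηy : 0 ≤ ηy)
    (hk : 0 < k) (hξ : 0 ≤ ξ)
    (f g : ℝ → ℂ) (hf : Differentiable ℝ f) (hg : Differentiable ℝ g)
    (hf' : ∀ t : ℝ, deriv f t =
      ((-(νx * k ^ 2) - νy * (ξ - k * t) ^ 2 : ℝ) : ℂ) * f t + Complex.I * (k : ℂ) * g t)
    (hg' : ∀ t : ℝ, deriv g t =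
      Complex.I * (α : ℂ) * (k : ℂ) / ((k ^ 2 + (ξ - k * t) ^ 2 : ℝ) : ℂ) * f t +
      ((-(ηx * k ^ 2) - ηy * (ξ - k * t) ^ 2 : ℝ) : ℂ) * g t) :
    ∀ T : ℝ, 0 ≤ T →
      α * ‖f T‖ ^ 2 + (k ^ 2 + (ξ - k * T) ^ 2) * ‖g T‖ ^ 2 ≤
        (1 + T ^ 2) *
          Real.exp (-2 * min νx ηx * k ^ 2 * T - min νy ηy * k ^ 2 * T ^ 3 / 6) *
          (α * ‖f 0‖ ^ 2 + (k ^ 2 + ξ ^ 2) * ‖g 0‖ ^ 2) := by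
  intro T hT
  have hμx1 : min νx ηx ≤ νx := min_le_left _ _
  have hμx2 : min νx ηx ≤ ηx := min_le_right _ _
  have hμy1 : min νy ηy ≤ νy := min_le_left _ _
  have hμy2 : min νy ηy ≤ ηy := min_le_right _ _
  have hμy0 : 0 ≤ min νy ηy := le_min hνy hηy
  -- the energy
  set E : ℝ → ℝ := fun s => α * ((f s).re ^ 2 + (f s).im ^ 2)
      + (k ^ 2 + (ξ - k * s) ^ 2) * ((g s).re ^ 2 + (g s).im ^ 2) with hEdef
  -- the exponential weight
  set W : ℝ → ℝ := fun s => Real.exp (2 * min νx ηx * k ^ 2 * s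
      + 2 * min νy ηy * (ξ ^ 2 * s - ξ * k * s ^ 2 + k ^ 2 * s ^ 3 / 3)) with hWdef
  clear_value E W
  have hWpos : ∀ t, 0 < W t := fun t => by simp only [hWdef]; exact Real.exp_pos _
  have hapos : ∀ t : ℝ, 0 < k ^ 2 + (ξ - k * t) ^ 2 := fun t => by positivity
  have hEnn : ∀ t, 0 ≤ E t := fun t => by
    simp only [hEdef]
    have := hapos t
    positivity
  -- derivative of E
  have hE : ∀ t : ℝ, HasDerivAt E
      (2 * (-(νx * k ^ 2) - νy * (ξ - k * t) ^ 2) * (α * ((f t).re ^ 2 + (f t).im ^ 2))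
        - 2 * k * (ξ - k * t) * ((g t).re ^ 2 + (g t).im ^ 2)
        + 2 * (-(ηx * k ^ 2) - ηy * (ξ - k * t) ^ 2)
            * ((k ^ 2 + (ξ - k * t) ^ 2) * ((g t).re ^ 2 + (g t).im ^ 2))) t := by
    intro t
    have hfre : HasDerivAt (fun s => (f s).re) ((deriv f t).re) t :=
      Complex.reCLM.hasFDerivAt.comp_hasDerivAt t (hf t).hasDerivAt
    have hfim : HasDerivAt (fun s => (f s).im) ((deriv f t).im) t :=
      Complex.imCLM.hasFDerivAt.comp_hasDerivAt t (hf t).hasDerivAt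
    have hgre : HasDerivAt (fun s => (g s).re) ((deriv g t).re) t :=
      Complex.reCLM.hasFDerivAt.comp_hasDerivAt t (hg t).hasDerivAt
    have hgim : HasDerivAt (fun s => (g s).im) ((deriv g t).im) t :=
      Complex.imCLM.hasFDerivAt.comp_hasDerivAt t (hg t).hasDerivAt
    have hc : Complex.I * (α : ℂ) * (k : ℂ) / ((k ^ 2 + (ξ - k * t) ^ 2 : ℝ) : ℂ)
        = Complex.I * ((α * k / (k ^ 2 + (ξ - k * t) ^ 2) : ℝ) : ℂ) := by
      push_cast; ring
    have e1 : (deriv f t).re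
        = (-(νx * k ^ 2) - νy * (ξ - k * t) ^ 2) * (f t).re - k * (g t).im := by
      rw [hf' t, aux_re1]
    have e2 : (deriv f t).im
        = (-(νx * k ^ 2) - νy * (ξ - k * t) ^ 2) * (f t).im + k * (g t).re := by
      rw [hf' t, aux_im1]
    have e3 : (deriv g t).re = -(α * k / (k ^ 2 + (ξ - k * t) ^ 2) * (f t).im)
        + (-(ηx * k ^ 2) - ηy * (ξ - k * t) ^ 2) * (g t).re := by
      rw [hg' t, hc, aux_re2]
    have e4 : (deriv g t).im = α * k / (k ^ 2 + (ξ - k * t) ^ 2) * (f t).re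
        + (-(ηx * k ^ 2) - ηy * (ξ - k * t) ^ 2) * (g t).im := by
      rw [hg' t, hc, aux_im2]
    have h1 := ((hfre.pow 2).add (hfim.pow 2)).const_mul α
    have hp : HasDerivAt (fun s : ℝ => k ^ 2 + (ξ - k * s) ^ 2) (2 * (ξ - k * t) * (-k)) t := by
      have hl : HasDerivAt (fun s : ℝ => ξ - k * s) (-k) t := by
        simpa using ((hasDerivAt_id t).const_mul k).const_sub ξ
      simpa using (hl.pow 2).const_add (k ^ 2)
    have h2 := hp.mul ((hgre.pow 2).add (hgim.pow 2))
    have h3 := h1.add h2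
    simp only [hEdef]
    refine h3.congr_deriv ?_
    rw [e1, e2, e3, e4]
    have hane : (k ^ 2 + (ξ - k * t) ^ 2) ≠ 0 := (hapos t).ne'
    simp only [show (2:ℕ) - 1 = 1 from rfl, pow_one, Nat.cast_ofNat, Pi.add_apply, Pi.pow_apply]
    field_simp
    ring
  -- derivative of W
  have hW : ∀ t : ℝ, HasDerivAt W
      ((2 * min νx ηx * k ^ 2 + 2 * min νy ηy * (ξ - k * t) ^ 2) * W t) t := by
    intro t
    have hQ : HasDerivAt (fun s : ℝ => 2 * min νx ηx * k ^ 2 * s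
        + 2 * min νy ηy * (ξ ^ 2 * s - ξ * k * s ^ 2 + k ^ 2 * s ^ 3 / 3))
        (2 * min νx ηx * k ^ 2 + 2 * min νy ηy * (ξ - k * t) ^ 2) t := by
      have hq1 : HasDerivAt (fun s : ℝ => ξ ^ 2 * s - ξ * k * s ^ 2 + k ^ 2 * s ^ 3 / 3)
          ((ξ - k * t) ^ 2) t := by
        have := (((hasDerivAt_id t).const_mul (ξ ^ 2)).sub
          ((hasDerivAt_pow 2 t).const_mul (ξ * k))).add
          (((hasDerivAt_pow 3 t).const_mul (k ^ 2)).div_const 3)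
        refine this.congr_deriv ?_
        ring
      have := ((hasDerivAt_id t).const_mul (2 * min νx ηx * k ^ 2)).add
        (hq1.const_mul (2 * min νy ηy))
      refine this.congr_deriv ?_
      ring
    simp only [hWdef]
    have := hQ.exp
    convert this using 1
    ring
  -- F1 := W * E is antitone where ξ - k t ≥ 0
  have hF1 : ∀ t : ℝ, HasDerivAt (fun s => W s * E s)
      ((2 * min νx ηx * k ^ 2 + 2 * min νy ηy * (ξ - k * t) ^ 2) * W t * E t
        + W t * (2 * (-(νx * k ^ 2) - νy * (ξ - k * t) ^ 2) * (α * ((f t).re ^ 2 + (f t).im ^ 2))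
        - 2 * k * (ξ - k * t) * ((g t).re ^ 2 + (g t).im ^ 2)
        + 2 * (-(ηx * k ^ 2) - ηy * (ξ - k * t) ^ 2)
            * ((k ^ 2 + (ξ - k * t) ^ 2) * ((g t).re ^ 2 + (g t).im ^ 2)))) t :=
    fun t => (hW t).mul (hE t)
  have hF1le : ∀ t : ℝ, 0 ≤ ξ - k * t → deriv (fun s => W s * E s) t ≤ 0 := by
    intro t hpt
    rw [(hF1 t).deriv]
    have hW' := hWpos t
    have ha' := hapos t
    have hNf : (0:ℝ) ≤ (f t).re ^ 2 + (f t).im ^ 2 := by positivity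
    have hNg : (0:ℝ) ≤ (g t).re ^ 2 + (g t).im ^ 2 := by positivity
    have hB : (2 * min νx ηx * k ^ 2 + 2 * min νy ηy * (ξ - k * t) ^ 2) * E t
        + (2 * (-(νx * k ^ 2) - νy * (ξ - k * t) ^ 2) * (α * ((f t).re ^ 2 + (f t).im ^ 2))
        - 2 * k * (ξ - k * t) * ((g t).re ^ 2 + (g t).im ^ 2)
        + 2 * (-(ηx * k ^ 2) - ηy * (ξ - k * t) ^ 2)
            * ((k ^ 2 + (ξ - k * t) ^ 2) * ((g t).re ^ 2 + (g t).im ^ 2))) ≤ 0 := by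
      simp only [hEdef]
      nlinarith [mul_nonneg (mul_nonneg (mul_nonneg (sub_nonneg.2 hμx1) (sq_nonneg k))
          hα) hNf,
        mul_nonneg (mul_nonneg (mul_nonneg (sub_nonneg.2 hμy1) (sq_nonneg (ξ - k * t)))
          hα) hNf,
        mul_nonneg (mul_nonneg (mul_nonneg (sub_nonneg.2 hμx2) (sq_nonneg k))
          ha'.le) hNg,
        mul_nonneg (mul_nonneg (mul_nonneg (sub_nonneg.2 hμy2) (sq_nonneg (ξ - k * t)))
          ha'.le) hNg,
        mul_nonneg (mul_nonneg hk.le hpt) hNg]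
    have h0 := mul_nonpos_iff.mpr (Or.inl ⟨hW'.le, hB⟩)
    linarith [h0]
  -- F2 := W * E / a is antitone where ξ - k t ≤ 0
  have hF2 : ∀ t : ℝ, HasDerivAt (fun s => W s * E s / (k ^ 2 + (ξ - k * s) ^ 2))
      ((((2 * min νx ηx * k ^ 2 + 2 * min νy ηy * (ξ - k * t) ^ 2) * W t * E t
        + W t * (2 * (-(νx * k ^ 2) - νy * (ξ - k * t) ^ 2) * (α * ((f t).re ^ 2 + (f t).im ^ 2))
        - 2 * k * (ξ - k * t) * ((g t).re ^ 2 + (g t).im ^ 2)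
        + 2 * (-(ηx * k ^ 2) - ηy * (ξ - k * t) ^ 2)
            * ((k ^ 2 + (ξ - k * t) ^ 2) * ((g t).re ^ 2 + (g t).im ^ 2))))
          * (k ^ 2 + (ξ - k * t) ^ 2)
        - W t * E t * (2 * (ξ - k * t) * (-k))) / (k ^ 2 + (ξ - k * t) ^ 2) ^ 2) t := by
    intro t
    have hp : HasDerivAt (fun s : ℝ => k ^ 2 + (ξ - k * s) ^ 2) (2 * (ξ - k * t) * (-k)) t := by
      have hl : HasDerivAt (fun s : ℝ => ξ - k * s) (-k) t := by
        simpa using ((hasDerivAt_id t).const_mul k).const_sub ξ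
      simpa using (hl.pow 2).const_add (k ^ 2)
    exact (hF1 t).div hp (hapos t).ne'
  have hF2le : ∀ t : ℝ, ξ - k * t ≤ 0 →
      deriv (fun s => W s * E s / (k ^ 2 + (ξ - k * s) ^ 2)) t ≤ 0 := by
    intro t hpt
    rw [(hF2 t).deriv]
    have hW' := hWpos t
    have ha' := hapos t
    have hNf : (0:ℝ) ≤ (f t).re ^ 2 + (f t).im ^ 2 := by positivity
    have hNg : (0:ℝ) ≤ (g t).re ^ 2 + (g t).im ^ 2 := by positivity
    apply div_nonpos_of_nonpos_of_nonneg _ (sq_nonneg _)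
    have hB : ((2 * min νx ηx * k ^ 2 + 2 * min νy ηy * (ξ - k * t) ^ 2) * E t
        + (2 * (-(νx * k ^ 2) - νy * (ξ - k * t) ^ 2) * (α * ((f t).re ^ 2 + (f t).im ^ 2))
        - 2 * k * (ξ - k * t) * ((g t).re ^ 2 + (g t).im ^ 2)
        + 2 * (-(ηx * k ^ 2) - ηy * (ξ - k * t) ^ 2)
            * ((k ^ 2 + (ξ - k * t) ^ 2) * ((g t).re ^ 2 + (g t).im ^ 2))))
          * (k ^ 2 + (ξ - k * t) ^ 2)
        - E t * (2 * (ξ - k * t) * (-k)) ≤ 0 := by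
      simp only [hEdef]
      nlinarith [mul_nonneg (mul_nonneg (mul_nonneg (mul_nonneg (sub_nonneg.2 hμx1)
          (sq_nonneg k)) hα) hNf) ha'.le,
        mul_nonneg (mul_nonneg (mul_nonneg (mul_nonneg (sub_nonneg.2 hμy1)
          (sq_nonneg (ξ - k * t))) hα) hNf) ha'.le,
        mul_nonneg (mul_nonneg (mul_nonneg (mul_nonneg (sub_nonneg.2 hμx2)
          (sq_nonneg k)) ha'.le) hNg) ha'.le,
        mul_nonneg (mul_nonneg (mul_nonneg (mul_nonneg (sub_nonneg.2 hμy2)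
          (sq_nonneg (ξ - k * t))) ha'.le) hNg) ha'.le,
        mul_nonneg (mul_nonneg (mul_nonneg hk.le (neg_nonneg.2 hpt)) hα) hNf]
    have h0 := mul_nonpos_iff.mpr (Or.inl ⟨hW'.le, hB⟩)
    linarith [h0]
  -- main estimate : W T * E T ≤ (1 + T^2) * E 0
  have hW0 : W 0 = 1 := by simp only [hWdef]; norm_num
  have hmain : W T * E T ≤ (1 + T ^ 2) * E 0 := by
    rcases le_or_gt 0 (ξ - k * T) with hpT | hpT
    · -- F1 antitone on [0, T]
      have anti : AntitoneOn (fun s => W s * E s) (Set.Icc 0 T) := by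
        apply antitoneOn_of_deriv_nonpos (convex_Icc 0 T)
        · exact fun x _ => ((hF1 x).continuousAt).continuousWithinAt
        · exact fun x _ => ((hF1 x).differentiableAt).differentiableWithinAt
        · intro x hx
          rw [interior_Icc] at hx
          apply hF1le
          nlinarith [hx.2, hk]
      have h1 : W T * E T ≤ W 0 * E 0 :=
        anti ⟨le_rfl, hT⟩ ⟨hT, le_rfl⟩ hT
      rw [hW0, one_mul] at h1
      nlinarith [mul_nonneg (sq_nonneg T) (hEnn 0)]
    · -- split at t₀ = ξ / k
      have ht0 : 0 ≤ ξ / k := div_nonneg hξ hk.le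
      have ht0T : ξ / k ≤ T := by
        rw [div_le_iff₀ hk]
        nlinarith
      have anti1 : AntitoneOn (fun s => W s * E s) (Set.Icc 0 (ξ / k)) := by
        apply antitoneOn_of_deriv_nonpos (convex_Icc _ _)
        · exact fun x _ => ((hF1 x).continuousAt).continuousWithinAt
        · exact fun x _ => ((hF1 x).differentiableAt).differentiableWithinAt
        · intro x hx
          rw [interior_Icc] at hx
          apply hF1le
          have : k * x ≤ k * (ξ / k) := by
            exact mul_le_mul_of_nonneg_left hx.2.le hk.le
          rw [mul_div_cancel₀ _ hk.ne'] at this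
          linarith
      have anti2 : AntitoneOn (fun s => W s * E s / (k ^ 2 + (ξ - k * s) ^ 2))
          (Set.Icc (ξ / k) T) := by
        apply antitoneOn_of_deriv_nonpos (convex_Icc _ _)
        · exact fun x _ => ((hF2 x).continuousAt).continuousWithinAt
        · exact fun x _ => ((hF2 x).differentiableAt).differentiableWithinAt
        · intro x hx
          rw [interior_Icc] at hx
          apply hF2le
          have : k * (ξ / k) ≤ k * x := mul_le_mul_of_nonneg_left hx.1.le hk.le
          rw [mul_div_cancel₀ _ hk.ne'] at this
          linarith
      have h1 : W (ξ / k) * E (ξ / k) ≤ W 0 * E 0 :=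
        anti1 ⟨le_rfl, ht0⟩ ⟨ht0, le_rfl⟩ ht0
      rw [hW0, one_mul] at h1
      have h2 : W T * E T / (k ^ 2 + (ξ - k * T) ^ 2)
          ≤ W (ξ / k) * E (ξ / k) / (k ^ 2 + (ξ - k * (ξ / k)) ^ 2) :=
        anti2 ⟨le_rfl, ht0T⟩ ⟨ht0T, le_rfl⟩ ht0T
      have hx0 : ξ - k * (ξ / k) = 0 := by field_simp; ring
      rw [hx0] at h2
      norm_num at h2
      -- so W T * E T * k^2 ≤ W(ξ/k) E(ξ/k) * a T ≤ E 0 * a T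
      rw [div_le_div_iff₀ (hapos T) (by positivity : (0:ℝ) < k ^ 2)] at h2
      have haT : k ^ 2 + (ξ - k * T) ^ 2 ≤ (1 + T ^ 2) * k ^ 2 := by
        nlinarith [mul_nonneg hξ (by nlinarith : 0 ≤ 2 * (k * T) - ξ)]
      have hWE0 : 0 ≤ W (ξ / k) * E (ξ / k) :=
        mul_nonneg (hWpos _).le (hEnn _)
      have hk2 : (0:ℝ) < k ^ 2 := by positivity
      have h1aT := mul_le_mul_of_nonneg_right h1 (hapos T).le
      have prodE0 := mul_nonneg (hEnn 0) (sub_nonneg.2 haT)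
      have h3 : W T * E T * k ^ 2 ≤ (1 + T ^ 2) * E 0 * k ^ 2 := by nlinarith [h2, h1aT, prodE0]
      exact le_of_mul_le_mul_right h3 hk2
  -- convert to the stated bound
  have hkey : 1 ≤ Real.exp (-2 * min νx ηx * k ^ 2 * T - min νy ηy * k ^ 2 * T ^ 3 / 6) * W T := by
    simp only [hWdef]; rw [← Real.exp_add]
    apply Real.one_le_exp
    nlinarith [mul_nonneg (mul_nonneg hμy0 hT) (sq_nonneg (2 * ξ - k * T))]
  have hET : α * ‖f T‖ ^ 2 + (k ^ 2 + (ξ - k * T) ^ 2) * ‖g T‖ ^ 2 = E T := by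
    simp only [hEdef, aux_norm_sq]
  have hE0 : α * ‖f 0‖ ^ 2 + (k ^ 2 + ξ ^ 2) * ‖g 0‖ ^ 2 = E 0 := by
    simp only [hEdef, aux_norm_sq]
    norm_num
  rw [hET, hE0]
  set D := Real.exp (-2 * min νx ηx * k ^ 2 * T - min νy ηy * k ^ 2 * T ^ 3 / 6) with hD
  have hDpos : 0 < D := Real.exp_pos _
  nlinarith [mul_nonneg (sub_nonneg.2 hkey) (hEnn T), mul_nonneg hDpos.le (sub_nonneg.2 hmain)]
end
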